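/- Let A, B be nonempty subsets of F₂ⁿ with A not contained in any coset of a proper subspace of F₂ⁿ. Then |A + B| ≥ min(|A| + |B| − 2^(n−3), 3·2^(n−2)). -/

import Mathlib

open Pointwise Set

namespace Stmt11Aux

variable {n : ℕ}

private lemma self_add' (v : Fin n → ZMod 2) : v + v = 0 := by
  funext i
  have h : ∀ a : ZMod 2, a + a = 0 := by decide
  exact h (v i)

private lemma card_G (n : ℕ) : Nat.card (Fin n → ZMod 2) = 2 ^ n := by
  simp [Nat.card_eq_fintype_card, ZMod.card]

private lemma key (n : ℕ) (hn : 3 ≤ n) :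
    ∀ m : ℕ, ∀ A B : Set (Fin n → ZMod 2), A.Nonempty → B.Nonempty → B.ncard ≤ m →
    (∀ (Q : Submodule (ZMod 2) (Fin n → ZMod 2)) (q : Fin n → ZMod 2),
        A ⊆ (fun v => v + q) '' (Q : Set (Fin n → ZMod 2)) → Q = ⊤) →
    min (A.ncard + B.ncard - 2 ^ (n - 3)) (3 * 2 ^ (n - 2)) ≤ (A + B).ncard := by
  intro m
  induction m with
  | zero =>
    intro A B hA hB hBm _
    have := (Set.ncard_pos (toFinite B)).2 hB
    omega
  | succ m ih =>
    intro A B hA hB hBm hspan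
    by_cases hcase : ∃ a ∈ A, ∃ b ∈ B, ∃ c ∈ B, a + b + c ∉ A
    · -- transform case
      obtain ⟨a, ha, b, hb, c, hc, habc⟩ := hcase
      set e := a + b with he
      set A' : Set (Fin n → ZMod 2) := A ∪ (fun x => e + x) '' B with hA'
      set B' : Set (Fin n → ZMod 2) := B ∩ ((fun x => e + x) '' A) with hB'
      have hbB' : b ∈ B' := by
        refine ⟨hb, a, ha, ?_⟩
        show a + b + a = b
        rw [add_comm a b, add_assoc, self_add' a, add_zero]
      have hcB' : c ∉ B' := by
        rintro ⟨-, a₁, ha₁, heq⟩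
        apply habc
        have : a + b + c = a₁ := by
          rw [← heq]
          show a + b + (a + b + a₁) = a₁
          rw [← add_assoc, self_add' (a + b), zero_add]
        rw [this]; exact ha₁
      have hsub : A' + B' ⊆ A + B := by
        rintro x hx
        rw [Set.mem_add] at hx
        obtain ⟨p, hp, q, hq, rfl⟩ := hx
        obtain ⟨hqB, a₁, ha₁, rfl⟩ := hq
        rcases hp with hpA | ⟨b₁, hb₁, rfl⟩
        · exact Set.add_mem_add hpA hqB
        · have : (fun x => e + x) b₁ + (fun x => e + x) a₁ = a₁ + b₁ := by
            show e + b₁ + (e + a₁) = a₁ + b₁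
            rw [show e + b₁ + (e + a₁) = (e + e) + (a₁ + b₁) by abel, self_add' e, zero_add]
          rw [this]
          exact Set.add_mem_add ha₁ hb₁
      have himg : (fun x => e + x) '' B' = ((fun x => e + x) '' B) ∩ A := by
        rw [hB', Set.image_inter (add_right_injective e)]
        congr 1
        rw [← Set.image_comp]
        have : ((fun x : Fin n → ZMod 2 => e + x) ∘ (fun x => e + x)) = id := by
          funext x
          show e + (e + x) = x
          rw [← add_assoc, self_add' e, zero_add]
        rw [this, Set.image_id]
      have hcardB' : B'.ncard = (((fun x => e + x) '' B) ∩ A).ncard := by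
        rw [← himg, Set.ncard_image_of_injective _ (add_right_injective e)]
      have hcardX : ((fun x => e + x) '' B).ncard = B.ncard :=
        Set.ncard_image_of_injective _ (add_right_injective e)
      have hUI := Set.ncard_union_add_ncard_inter A ((fun x => e + x) '' B)
        (toFinite _) (toFinite _)
      have hcardsum : A'.ncard + B'.ncard = A.ncard + B.ncard := by
        rw [hA', hcardB', Set.inter_comm]
        omega
      have hB'le : B'.ncard ≤ m := by
        have h1 : B' ⊆ B \ {c} := fun x hx =>
          ⟨hx.1, by simp only [Set.mem_singleton_iff]; rintro rfl; exact hcB' hx⟩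
        have h2 := Set.ncard_le_ncard h1 (toFinite _)
        have h3 : (B \ {c}).ncard = B.ncard - 1 := Set.ncard_diff_singleton_of_mem hc
        have h4 := (Set.ncard_pos (toFinite B)).2 hB
        omega
      have hA'span : ∀ (Q : Submodule (ZMod 2) (Fin n → ZMod 2)) (q : Fin n → ZMod 2),
          A' ⊆ (fun v => v + q) '' (Q : Set (Fin n → ZMod 2)) → Q = ⊤ := by
        intro Q q h
        exact hspan Q q (fun x hx => h (Or.inl hx))
      have hrec := ih A' B' (hA.mono Set.subset_union_left) ⟨b, hbB'⟩ hB'le hA'span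
      calc min (A.ncard + B.ncard - 2 ^ (n - 3)) (3 * 2 ^ (n - 2))
          = min (A'.ncard + B'.ncard - 2 ^ (n - 3)) (3 * 2 ^ (n - 2)) := by rw [hcardsum]
        _ ≤ (A' + B').ncard := hrec
        _ ≤ (A + B).ncard := Set.ncard_le_ncard hsub (toFinite _)
    · -- terminal case
      push_neg at hcase
      obtain ⟨b₀, hb₀⟩ := hB
      set K : Submodule (ZMod 2) (Fin n → ZMod 2) := Submodule.span (ZMod 2) (B + B) with hKdef
      have hZM : ∀ c : ZMod 2, c = 0 ∨ c = 1 := by decide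
      have hAK : ∀ k ∈ K, ∀ x ∈ A, x + k ∈ A := by
        intro k hk
        induction hk using Submodule.span_induction with
        | mem y hy =>
          rw [Set.mem_add] at hy
          obtain ⟨b₁, hb₁, c₁, hc₁, rfl⟩ := hy
          intro x hx
          rw [← add_assoc]
          exact hcase x hx b₁ hb₁ c₁ hc₁
        | zero => intro x hx; simpa using hx
        | add y z hy hz py pz =>
          intro x hx
          rw [← add_assoc]
          exact pz (x + y) (py x hx)
        | smul c y hy py =>
          intro x hx
          rcases hZM c with rfl | rfl
          · simpa using hx
          · simpa using py x hx
      have hBsub : B ⊆ (fun v => v + b₀) '' (K : Set (Fin n → ZMod 2)) := by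
        intro x hx
        refine ⟨b₀ + x, Submodule.subset_span (Set.add_mem_add hb₀ hx), ?_⟩
        show b₀ + x + b₀ = x
        rw [add_comm b₀ x, add_assoc, self_add' b₀, add_zero]
      have hBcard : B.ncard ≤ (K : Set (Fin n → ZMod 2)).ncard := by
        calc B.ncard ≤ ((fun v => v + b₀) '' (K : Set (Fin n → ZMod 2))).ncard :=
              Set.ncard_le_ncard hBsub (toFinite _)
          _ = (K : Set (Fin n → ZMod 2)).ncard :=
              Set.ncard_image_of_injective _ (add_left_injective b₀)
      have hABcard : A.ncard ≤ (A + B).ncard := by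
        have hsub : (fun v => v + b₀) '' A ⊆ A + B := by
          rintro x ⟨a₁, ha₁, rfl⟩
          exact Set.add_mem_add ha₁ hb₀
        calc A.ncard = ((fun v => v + b₀) '' A).ncard :=
              (Set.ncard_image_of_injective _ (add_left_injective b₀)).symm
          _ ≤ (A + B).ncard := Set.ncard_le_ncard hsub (toFinite _)
      by_cases hKsmall : (K : Set (Fin n → ZMod 2)).ncard ≤ 2 ^ (n - 3)
      · exact le_trans (min_le_left _ _) (by omega)
      · -- K is big
        have hdvd : Nat.card K ∣ 2 ^ n := by
          have h1 := AddSubgroup.card_addSubgroup_dvd_card K.toAddSubgroup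
          rwa [card_G] at h1
        have hKcard : (K : Set (Fin n → ZMod 2)).ncard = Nat.card K := by
          rw [← Nat.card_coe_set_eq]
          rfl
        have hK2 : 2 ^ (n - 2) ≤ (K : Set (Fin n → ZMod 2)).ncard := by
          obtain ⟨j, hj, hEq⟩ := (Nat.dvd_prime_pow Nat.prime_two).1 hdvd
          rw [hKcard, hEq]
          rw [hKcard, hEq] at hKsmall
          have hj2 : n - 3 < j := by
            by_contra hcon
            push_neg at hcon
            exact hKsmall (Nat.pow_le_pow_right (by norm_num) hcon)
          exact Nat.pow_le_pow_right (by norm_num) (by omega)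
        have hpow4 : 2 ^ (n - 2) * 4 = 2 ^ n := by
          have : n - 2 + 2 = n := by omega
          calc 2 ^ (n - 2) * 4 = 2 ^ (n - 2) * 2 ^ 2 := by norm_num
            _ = 2 ^ (n - 2 + 2) := (pow_add 2 (n - 2) 2).symm
            _ = 2 ^ n := by rw [this]
        have hcoset : ∀ a₁ ∈ A,
            (fun k => a₁ + k) '' (K : Set (Fin n → ZMod 2)) ⊆ A := by
          rintro a₁ ha₁ x ⟨k, hk, rfl⟩
          exact hAK k hk a₁ ha₁
        have hcosetcard : ∀ a₁ : Fin n → ZMod 2,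
            ((fun k => a₁ + k) '' (K : Set (Fin n → ZMod 2))).ncard
              = (K : Set (Fin n → ZMod 2)).ncard := fun a₁ =>
          Set.ncard_image_of_injective _ (add_right_injective a₁)
        have hdisj : ∀ u v : Fin n → ZMod 2, u + v ∉ K →
            Disjoint ((fun k => u + k) '' (K : Set (Fin n → ZMod 2)))
              ((fun k => v + k) '' (K : Set (Fin n → ZMod 2))) := by
          intro u v huv
          rw [Set.disjoint_left]
          rintro x ⟨k₁, hk₁, rfl⟩ ⟨k₂, hk₂, heq⟩
          apply huv
          have h' : v + k₂ = u + k₁ := heq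
          have huvk : u + v = k₁ + k₂ := by
            calc u + v = u + k₁ + (v + k₁) := by
                  rw [show u + k₁ + (v + k₁) = u + v + (k₁ + k₁) by abel, self_add' k₁, add_zero]
              _ = v + k₂ + (v + k₁) := by rw [h']
              _ = k₁ + k₂ := by
                  rw [show v + k₂ + (v + k₁) = k₁ + k₂ + (v + v) by abel, self_add' v, add_zero]
          rw [huvk]
          exact K.add_mem (SetLike.mem_coe.1 hk₁) (SetLike.mem_coe.1 hk₂)
        have hA3 : 3 * 2 ^ (n - 2) ≤ A.ncard := by
          by_cases hKtop : K = ⊤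
          · have hAuniv : A = Set.univ := by
              obtain ⟨a₀, ha₀⟩ := hA
              refine Set.eq_univ_of_forall fun x => ?_
              have hmem : a₀ + x ∈ K := by rw [hKtop]; exact Submodule.mem_top
              have := hAK (a₀ + x) hmem a₀ ha₀
              rwa [← add_assoc, self_add' a₀, zero_add] at this
            rw [hAuniv, Set.ncard_univ, card_G]
            omega
          · have hex : ∃ a₁ ∈ A, ∃ a₂ ∈ A, a₁ + a₂ ∉ K := by
              by_contra hcon
              push_neg at hcon
              obtain ⟨a₀, ha₀⟩ := hA
              refine hKtop (hspan K a₀ ?_)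
              intro x hx
              refine ⟨x + a₀, SetLike.mem_coe.2 (hcon x hx a₀ ha₀), ?_⟩
              show x + a₀ + a₀ = x
              rw [add_assoc, self_add' a₀, add_zero]
            obtain ⟨a₁, ha₁, a₂, ha₂, h12⟩ := hex
            set C1 := (fun k => a₁ + k) '' (K : Set (Fin n → ZMod 2)) with hC1
            set C2 := (fun k => a₂ + k) '' (K : Set (Fin n → ZMod 2)) with hC2
            by_cases hthree : ∃ a₃ ∈ A, a₃ ∉ C1 ∪ C2
            · obtain ⟨a₃, ha₃, h3⟩ := hthree
              set C3 := (fun k => a₃ + k) '' (K : Set (Fin n → ZMod 2)) with hC3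
              have h13 : a₁ + a₃ ∉ K := by
                intro hmem
                apply h3
                left
                refine ⟨a₁ + a₃, SetLike.mem_coe.2 hmem, ?_⟩
                show a₁ + (a₁ + a₃) = a₃
                rw [← add_assoc, self_add' a₁, zero_add]
              have h23 : a₂ + a₃ ∉ K := by
                intro hmem
                apply h3
                right
                refine ⟨a₂ + a₃, SetLike.mem_coe.2 hmem, ?_⟩
                show a₂ + (a₂ + a₃) = a₃
                rw [← add_assoc, self_add' a₂, zero_add]
              have hd12 := hdisj a₁ a₂ h12
              have hd13 := hdisj a₁ a₃ h13
              have hd23 := hdisj a₂ a₃ h23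
              have hUsub : C1 ∪ C2 ∪ C3 ⊆ A :=
                Set.union_subset (Set.union_subset (hcoset a₁ ha₁) (hcoset a₂ ha₂))
                  (hcoset a₃ ha₃)
              have hUcard : (C1 ∪ C2 ∪ C3).ncard
                  = 3 * (K : Set (Fin n → ZMod 2)).ncard := by
                rw [Set.ncard_union_eq (Set.disjoint_union_left.2 ⟨hd13, hd23⟩)
                    (toFinite _) (toFinite _),
                  Set.ncard_union_eq hd12 (toFinite _) (toFinite _),
                  hcosetcard a₁, hcosetcard a₂, hcosetcard a₃]
                ring
              have := Set.ncard_le_ncard hUsub (toFinite A)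
              rw [hUcard] at this
              calc 3 * 2 ^ (n - 2) ≤ 3 * (K : Set (Fin n → ZMod 2)).ncard := by omega
                _ ≤ A.ncard := this
            · push_neg at hthree
              set v := a₁ + a₂ with hv
              set K' : Submodule (ZMod 2) (Fin n → ZMod 2) :=
                K ⊔ Submodule.span (ZMod 2) {v} with hK'
              have hvK' : v ∈ K' :=
                Submodule.mem_sup_right (Submodule.subset_span rfl)
              have hsubK' : A ⊆ (fun x => x + a₁) '' (K' : Set (Fin n → ZMod 2)) := by
                intro x hx
                rcases hthree x hx with ⟨k, hk, rfl⟩ | ⟨k, hk, rfl⟩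
                · refine ⟨k, SetLike.mem_coe.2 (Submodule.mem_sup_left
                    (SetLike.mem_coe.1 hk)), ?_⟩
                  show k + a₁ = a₁ + k
                  rw [add_comm]
                · refine ⟨k + v, SetLike.mem_coe.2 (K'.add_mem
                    (Submodule.mem_sup_left (SetLike.mem_coe.1 hk)) hvK'), ?_⟩
                  show k + v + a₁ = a₂ + k
                  rw [hv, show k + (a₁ + a₂) + a₁ = a₂ + k + (a₁ + a₁) by abel,
                    self_add' a₁, add_zero]
              have hK'top : K' = ⊤ := hspan K' a₁ hsubK'
              have hsplit : (K' : Set (Fin n → ZMod 2)) ⊆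
                  (K : Set (Fin n → ZMod 2)) ∪
                    (fun k => v + k) '' (K : Set (Fin n → ZMod 2)) := by
                intro x hx
                rw [SetLike.mem_coe, Submodule.mem_sup] at hx
                obtain ⟨y, hy, z, hz, rfl⟩ := hx
                rw [Submodule.mem_span_singleton] at hz
                obtain ⟨c, rfl⟩ := hz
                rcases hZM c with rfl | rfl
                · left
                  simpa using hy
                · right
                  exact ⟨y, SetLike.mem_coe.2 hy, by simp [add_comm]⟩
              have hbig : 2 ^ n ≤ 2 * (K : Set (Fin n → ZMod 2)).ncard := by
                have h1 := Set.ncard_le_ncard hsplit (toFinite _)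
                have h2 := Set.ncard_union_le (K : Set (Fin n → ZMod 2))
                  ((fun k => v + k) '' (K : Set (Fin n → ZMod 2)))
                have h3 := hcosetcard v
                have h4 : (K' : Set (Fin n → ZMod 2)).ncard = 2 ^ n := by
                  rw [hK'top]
                  show (Set.univ : Set (Fin n → ZMod 2)).ncard = 2 ^ n
                  rw [Set.ncard_univ, card_G]
                omega
              have hd12 := hdisj a₁ a₂ h12
              have hUsub : C1 ∪ C2 ⊆ A :=
                Set.union_subset (hcoset a₁ ha₁) (hcoset a₂ ha₂)
              have hUcard : (C1 ∪ C2).ncard = 2 * (K : Set (Fin n → ZMod 2)).ncard := by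
                rw [Set.ncard_union_eq hd12 (toFinite _) (toFinite _),
                  hcosetcard a₁, hcosetcard a₂]
                ring
              have hle := Set.ncard_le_ncard hUsub (toFinite A)
              rw [hUcard] at hle
              omega
        exact le_trans (min_le_right _ _) (le_trans hA3 hABcard)

end Stmt11Aux

theorem stmt_11 (n : ℕ) (hn : 3 ≤ n) (A B : Set (Fin n → ZMod 2))
    (hA : A.Nonempty) (hB : B.Nonempty)
    (hAcoset : ¬ ∃ (Q : Submodule (ZMod 2) (Fin n → ZMod 2)) (q : Fin n → ZMod 2),
      Q ≠ ⊤ ∧ A ⊆ (fun v => v + q) '' (Q : Set (Fin n → ZMod 2))) :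
    min (Nat.card A + Nat.card B - 2 ^ (n - 3)) (3 * 2 ^ (n - 2)) ≤
      Nat.card (A + B : Set (Fin n → ZMod 2)) := by
  have hspan : ∀ (Q : Submodule (ZMod 2) (Fin n → ZMod 2)) (q : Fin n → ZMod 2),
      A ⊆ (fun v => v + q) '' (Q : Set (Fin n → ZMod 2)) → Q = ⊤ := by
    intro Q q h
    by_contra hne
    exact hAcoset ⟨Q, q, hne, h⟩
  have h := Stmt11Aux.key n hn B.ncard A B hA hB le_rfl hspan
  simpa [Nat.card_coe_set_eq] using h
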